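/- Let Q be a field, φ : Q → Q a ring endomorphism, and M a nonzero finite-dimensional Q-vector space equipped with a φ-semilinear endomorphism τ : M → M such that the Q-span of τ(M) equals M. Assume (M, τ) is simple: the only Q-subspaces N ⊆ M with τ(N) ⊆ N are 0 and M. Let φ̂ be the ring endomorphism of Q(X) extending φ with φ̂(X) = X, and equip M' := Q(X) ⊗_Q M with the φ̂-semilinear endomorphism τ' determined by τ'(g ⊗ m) = φ̂(g) ⊗ τ(m). Then (M', τ') is simple: the only Q(X)-subspaces of M' stable under τ' are 0 and M'. -/

import Mathlib

open TensorProduct Polynomial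

set_option linter.unusedSectionVars false
set_option maxHeartbeats 1000000

section stmt11aux

variable {Q : Type*} [Field Q] {M : Type*} [AddCommGroup M] [Module Q M]
  {ι : Type*} [Fintype ι] [DecidableEq ι]

noncomputable def stmt11pelt (b : Module.Basis ι Q M) (q : ι → Q[X]) : RatFunc Q ⊗[Q] M :=
  ∑ i, algebraMap Q[X] (RatFunc Q) (q i) • (b.baseChange (RatFunc Q)) i

lemma stmt11pelt_repr (b : Module.Basis ι Q M) (q : ι → Q[X]) (j : ι) :
    (b.baseChange (RatFunc Q)).repr (stmt11pelt b q) j = algebraMap Q[X] (RatFunc Q) (q j) := by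
  rw [stmt11pelt, map_sum]
  have h : ∀ i : ι, ((b.baseChange (RatFunc Q)).repr
      (algebraMap Q[X] (RatFunc Q) (q i) • (b.baseChange (RatFunc Q)) i)) j
      = if i = j then algebraMap Q[X] (RatFunc Q) (q j) else 0 := by
    intro i
    rw [map_smul, Module.Basis.repr_self, Finsupp.smul_apply, Finsupp.single_apply]
    split <;> simp_all
  rw [Finsupp.finset_sum_apply, Finset.sum_congr rfl fun i _ => h i, Finset.sum_ite_eq']
  simp

lemma stmt11repr_sum (b : Module.Basis ι Q M) (c : ι → Q) (j : ι) :
    b.repr (∑ i, c i • b i) j = c j := by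
  rw [map_sum]
  have h : ∀ i : ι, (b.repr (c i • b i)) j = if i = j then c j else 0 := by
    intro i
    rw [map_smul, Module.Basis.repr_self, Finsupp.smul_apply, Finsupp.single_apply]
    split <;> simp_all
  rw [Finsupp.finset_sum_apply, Finset.sum_congr rfl fun i _ => h i, Finset.sum_ite_eq']
  simp

lemma stmt11pelt_eq_zero {b : Module.Basis ι Q M} {q : ι → Q[X]}
    (h : stmt11pelt b q = 0) (j : ι) : q j = 0 := by
  have := stmt11pelt_repr b q j
  rw [h] at this
  simp only [map_zero, Finsupp.coe_zero, Pi.zero_apply] at this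
  exact RatFunc.algebraMap_injective Q (by simpa using this.symm)

lemma stmt11pelt_smul (b : Module.Basis ι Q M) (p : Q[X]) (q : ι → Q[X]) :
    stmt11pelt b (fun i => p * q i) = algebraMap Q[X] (RatFunc Q) p • stmt11pelt b q := by
  simp [stmt11pelt, Finset.smul_sum, smul_smul, ← map_mul, algebraMap_smul]

lemma stmt11pelt_add (b : Module.Basis ι Q M) (q q' : ι → Q[X]) :
    stmt11pelt b (fun i => q i + q' i) = stmt11pelt b q + stmt11pelt b q' := by
  simp [stmt11pelt, add_smul, Finset.sum_add_distrib]

lemma stmt11pelt_sum (b : Module.Basis ι Q M) {κ : Type*} (s : Finset κ) (r : κ → ι → Q[X]) :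
    stmt11pelt b (fun j => ∑ i ∈ s, r i j) = ∑ i ∈ s, stmt11pelt b (r i) := by
  simp only [stmt11pelt, map_sum, Finset.sum_smul]
  rw [Finset.sum_comm]

lemma stmt11pelt_tmul (b : Module.Basis ι Q M) (q : ι → Q[X]) :
    stmt11pelt b q = ∑ i, algebraMap Q[X] (RatFunc Q) (q i) ⊗ₜ[Q] b i := by
  simp [stmt11pelt, Module.Basis.baseChange_apply, TensorProduct.smul_tmul', smul_eq_mul,
    Algebra.smul_def, mul_one]

lemma stmt11common (c : ι → RatFunc Q) :
    ∃ (f : Q[X]) (p : ι → Q[X]), f ≠ 0 ∧ ∀ i,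
      algebraMap Q[X] (RatFunc Q) (p i) = algebraMap Q[X] (RatFunc Q) f * c i
      ∧ (p i = 0 ↔ c i = 0) := by
  refine ⟨∏ j, (c j).denom, fun i => (c i).num * ∏ j ∈ Finset.univ.erase i, (c j).denom,
    Finset.prod_ne_zero_iff.mpr fun i _ => RatFunc.denom_ne_zero _, fun i => ⟨?_, ?_⟩⟩
  · have h1 := RatFunc.num_div_denom (c i)
    rw [div_eq_iff (RatFunc.algebraMap_ne_zero (RatFunc.denom_ne_zero (c i)))] at h1
    rw [map_mul, h1, ← Finset.mul_prod_erase _ _ (Finset.mem_univ i), map_mul]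
    ring
  · have hpr : (∏ j ∈ Finset.univ.erase i, (c j).denom) ≠ 0 :=
      Finset.prod_ne_zero_iff.mpr fun j _ => RatFunc.denom_ne_zero _
    constructor
    · intro h
      rcases mul_eq_zero.mp h with h | h
      · exact RatFunc.num_eq_zero_iff.mp h
      · exact absurd h hpr
    · intro h
      simp [h]

lemma stmt11clear (b : Module.Basis ι Q M) (z : RatFunc Q ⊗[Q] M) :
    ∃ (f : Q[X]) (q : ι → Q[X]), f ≠ 0 ∧
      algebraMap Q[X] (RatFunc Q) f • z = stmt11pelt b q := by
  obtain ⟨f, p, hf, hp⟩ := stmt11common (fun i => (b.baseChange (RatFunc Q)).repr z i)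
  refine ⟨f, p, hf, ?_⟩
  conv_lhs => rw [← Module.Basis.sum_repr (b.baseChange (RatFunc Q)) z]
  rw [Finset.smul_sum, stmt11pelt]
  refine Finset.sum_congr rfl fun i _ => ?_
  rw [smul_smul, ← (hp i).1]

lemma stmt11psi {Q : Type*} [Field Q] (φ : Q →+* Q) (ψ : RatFunc Q →+* RatFunc Q)
    (hψC : ∀ a : Q, ψ (RatFunc.C a) = RatFunc.C (φ a)) (hψX : ψ RatFunc.X = RatFunc.X)
    (p : Q[X]) :
    ψ (algebraMap Q[X] (RatFunc Q) p) = algebraMap Q[X] (RatFunc Q) (p.map φ) := by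
  induction p using Polynomial.induction_on' with
  | add p q hp hq => simp [map_add, hp, hq]
  | monomial n a =>
    simp [← C_mul_X_pow_eq_monomial, map_mul, map_pow, RatFunc.algebraMap_C,
      RatFunc.algebraMap_X, hψC, hψX]

lemma stmt11tau (φ : Q →+* Q) (τ : M →ₛₗ[φ] M) (ψ : RatFunc Q →+* RatFunc Q)
    (hψC : ∀ a : Q, ψ (RatFunc.C a) = RatFunc.C (φ a)) (hψX : ψ RatFunc.X = RatFunc.X)
    (τ' : RatFunc Q ⊗[Q] M → RatFunc Q ⊗[Q] M)
    (hadd : ∀ a b : RatFunc Q ⊗[Q] M, τ' (a + b) = τ' a + τ' b)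
    (hτ' : ∀ (g : RatFunc Q) (m : M), τ' (g ⊗ₜ[Q] m) = ψ g ⊗ₜ[Q] τ m)
    (b : Module.Basis ι Q M) (q : ι → Q[X]) :
    τ' (stmt11pelt b q) = stmt11pelt b
      (fun j => ∑ i, ((q i).map φ) * Polynomial.C (b.repr (τ (b i)) j)) := by
  let T : RatFunc Q ⊗[Q] M →+ RatFunc Q ⊗[Q] M := AddMonoidHom.mk' τ' hadd
  have hT : τ' (∑ i, algebraMap Q[X] (RatFunc Q) (q i) ⊗ₜ[Q] b i)
      = ∑ i, τ' (algebraMap Q[X] (RatFunc Q) (q i) ⊗ₜ[Q] b i) := map_sum T _ _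
  rw [stmt11pelt_tmul, hT]
  have step : ∀ i, τ' (algebraMap Q[X] (RatFunc Q) (q i) ⊗ₜ[Q] b i)
      = ∑ j, algebraMap Q[X] (RatFunc Q)
          ((q i).map φ * Polynomial.C (b.repr (τ (b i)) j)) ⊗ₜ[Q] b j := by
    intro i
    rw [hτ', stmt11psi φ ψ hψC hψX]
    conv_lhs => rw [← Module.Basis.sum_repr b (τ (b i))]
    rw [TensorProduct.tmul_sum]
    refine Finset.sum_congr rfl fun j _ => ?_
    rw [TensorProduct.tmul_smul, TensorProduct.smul_tmul', Algebra.smul_def, map_mul,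
      RatFunc.algebraMap_C, RatFunc.algebraMap_eq_C, mul_comm]
  rw [Finset.sum_congr rfl fun i _ => step i, Finset.sum_comm, stmt11pelt_tmul]
  refine Finset.sum_congr rfl fun j _ => ?_
  rw [map_sum, TensorProduct.sum_tmul]

end stmt11aux

/-- **Simplicity is preserved under the purely transcendental extension `Q(X)/Q`.**
Let `Q` be a field, `φ : Q → Q` a ring endomorphism, and `M` a nonzero finite-dimensional
`Q`-vector space with a `φ`-semilinear endomorphism `τ` whose image spans `M` and which is
simple (the only `τ`-stable subspaces are `0` and `M`).  Let `ψ = φ̂` be the endomorphism of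
`Q(X)` extending `φ` with `ψ(X) = X`, and let `τ'` be the `ψ`-semilinear endomorphism of
`M' = Q(X) ⊗_Q M` with `τ'(g ⊗ m) = ψ(g) ⊗ τ(m)`.  Then `(M', τ')` is simple: its only
`τ'`-stable `Q(X)`-subspaces are `0` and `M'`. -/
theorem stmt11 {Q : Type*} [Field Q] (φ : Q →+* Q)
    {M : Type*} [AddCommGroup M] [Module Q M] [FiniteDimensional Q M] [Nontrivial M]
    (τ : M →ₛₗ[φ] M)
    (hspan : Submodule.span Q (Set.range fun m : M => τ m) = ⊤)
    (hsimple : ∀ N : Submodule Q M, (∀ m ∈ N, τ m ∈ N) → N = ⊥ ∨ N = ⊤)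
    (ψ : RatFunc Q →+* RatFunc Q)
    (hψC : ∀ a : Q, ψ (RatFunc.C a) = RatFunc.C (φ a))
    (hψX : ψ RatFunc.X = RatFunc.X)
    (τ' : RatFunc Q ⊗[Q] M → RatFunc Q ⊗[Q] M)
    (hadd : ∀ a b : RatFunc Q ⊗[Q] M, τ' (a + b) = τ' a + τ' b)
    (hτ' : ∀ (g : RatFunc Q) (m : M), τ' (g ⊗ₜ[Q] m) = ψ g ⊗ₜ[Q] τ m) :
    ∀ N : Submodule (RatFunc Q) (RatFunc Q ⊗[Q] M),
      (∀ z ∈ N, τ' z ∈ N) → N = ⊥ ∨ N = ⊤ := by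
  classical
  intro N hN
  by_cases hbot : N = ⊥
  · exact Or.inl hbot
  refine Or.inr ?_
  let b : Module.Basis (Fin (Module.finrank Q M)) Q M := Module.finBasis Q M
  have hτpelt := stmt11tau φ τ ψ hψC hψX τ' hadd hτ' b
  -- the set of degree bounds realized by nonzero polynomial elements of N
  set P : ℕ → Prop := fun e => ∃ q : Fin (Module.finrank Q M) → Q[X],
      (∀ i, (q i).degree < (e : ℕ)) ∧ stmt11pelt b q ∈ N ∧ q ≠ 0 with hP
  have hPex : ∃ e, P e := by
    obtain ⟨z, hzN, hz0⟩ := Submodule.exists_mem_ne_zero_of_ne_bot hbot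
    obtain ⟨f, q, hf, hfq⟩ := stmt11clear b z
    have hqN : stmt11pelt b q ∈ N := hfq ▸ N.smul_mem _ hzN
    have hq0 : q ≠ 0 := by
      intro h
      apply hz0
      have h1 : algebraMap Q[X] (RatFunc Q) f • z = 0 := by
        rw [hfq, h]; simp [stmt11pelt]
      rcases smul_eq_zero.mp h1 with h' | h'
      · exact absurd h' (RatFunc.algebraMap_ne_zero hf)
      · exact h'
    refine ⟨(Finset.univ.sup fun i => (q i).natDegree) + 1, q, fun i => ?_, hqN, hq0⟩
    refine lt_of_le_of_lt (Polynomial.degree_le_natDegree) ?_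
    have h2 : (q i).natDegree < (Finset.univ.sup fun i => (q i).natDegree) + 1 :=
      Nat.lt_succ_of_le (Finset.le_sup (f := fun i => (q i).natDegree) (Finset.mem_univ i))
    exact_mod_cast h2
  set d : ℕ := Nat.find hPex with hd
  obtain ⟨q0, hq0d, hq0N, hq0ne⟩ : P d := Nat.find_spec hPex
  have hP0 : ¬ P 0 := by
    rintro ⟨q, hq, -, hqne⟩
    apply hqne
    funext i
    exact Polynomial.ext fun m =>
      (Polynomial.degree_lt_iff_coeff_zero _ _).mp (by exact_mod_cast hq i) m (Nat.zero_le m)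
  have hd0 : 0 < d := Nat.pos_of_ne_zero fun h => hP0 (h ▸ Nat.find_spec hPex)
  -- the space of top coefficients
  let L : Submodule Q M :=
    { carrier := {m | ∃ q : Fin (Module.finrank Q M) → Q[X],
        (∀ i, (q i).degree < (d : ℕ)) ∧ stmt11pelt b q ∈ N ∧
        (∑ i, (q i).coeff (d - 1) • b i) = m}
      add_mem' := by
        rintro x y ⟨q, hq, hqN, rfl⟩ ⟨r, hr, hrN, rfl⟩
        refine ⟨fun i => q i + r i, fun i =>
          lt_of_le_of_lt (Polynomial.degree_add_le _ _) (max_lt (hq i) (hr i)), ?_, ?_⟩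
        · rw [stmt11pelt_add]; exact N.add_mem hqN hrN
        · simp [Polynomial.coeff_add, add_smul, Finset.sum_add_distrib]
      zero_mem' := by
        refine ⟨0, fun i => ?_, by simpa [stmt11pelt] using N.zero_mem, by simp⟩
        rw [Pi.zero_apply, Polynomial.degree_zero]
        exact WithBot.bot_lt_coe d
      smul_mem' := by
        rintro r x ⟨q, hq, hqN, rfl⟩
        refine ⟨fun i => Polynomial.C r * q i, fun i => ?_, ?_, ?_⟩
        · refine lt_of_le_of_lt ?_ (hq i)
          calc (Polynomial.C r * q i).degree ≤ (Polynomial.C r).degree + (q i).degree :=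
                Polynomial.degree_mul_le _ _
            _ ≤ 0 + (q i).degree := add_le_add_left Polynomial.degree_C_le _
            _ = (q i).degree := zero_add _
        · rw [stmt11pelt_smul]; exact N.smul_mem _ hqN
        · simp [Polynomial.coeff_C_mul, mul_smul, Finset.smul_sum] }
  have hLstable : ∀ m ∈ L, τ m ∈ L := by
    rintro m ⟨q, hq, hqN, rfl⟩
    refine ⟨fun j => ∑ i, ((q i).map φ) * Polynomial.C (b.repr (τ (b i)) j),
      fun j => ?_, ?_, ?_⟩
    · have hbd : (⊥ : WithBot ℕ) < ((d : ℕ) : WithBot ℕ) := WithBot.bot_lt_coe d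
      refine lt_of_le_of_lt (Polynomial.degree_sum_le _ _)
        ((Finset.sup_lt_iff hbd).mpr fun i _ => ?_)
      refine lt_of_le_of_lt ?_ (hq i)
      calc (((q i).map φ) * Polynomial.C (b.repr (τ (b i)) j)).degree
          ≤ ((q i).map φ).degree + (Polynomial.C (b.repr (τ (b i)) j)).degree :=
            Polynomial.degree_mul_le _ _
        _ ≤ (q i).degree + 0 := add_le_add Polynomial.degree_map_le Polynomial.degree_C_le
        _ = (q i).degree := add_zero _
    · rw [← hτpelt]; exact hN _ hqN
    · have hexp : ∀ (a : Q) (w : M), a • w = ∑ j, (a * b.repr w j) • b j := by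
        intro a w
        conv_lhs => rw [← Module.Basis.sum_repr b w]
        rw [Finset.smul_sum]
        exact Finset.sum_congr rfl fun j _ => smul_smul _ _ _
      have hrhs : τ (∑ i, (q i).coeff (d - 1) • b i)
          = ∑ i, ∑ j, (φ ((q i).coeff (d - 1)) * b.repr (τ (b i)) j) • b j := by
        rw [map_sum]
        refine Finset.sum_congr rfl fun i _ => ?_
        rw [LinearMap.map_smulₛₗ, hexp]
      rw [hrhs, Finset.sum_comm]
      refine Finset.sum_congr rfl fun j _ => ?_
      rw [Polynomial.finset_sum_coeff, Finset.sum_smul]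
      refine Finset.sum_congr rfl fun i _ => ?_
      rw [Polynomial.coeff_mul_C, Polynomial.coeff_map]
  have hLtop : L = ⊤ := by
    rcases hsimple L hLstable with h | h
    · exfalso
      have hm0 : (∑ i, (q0 i).coeff (d - 1) • b i) ∈ L := ⟨q0, hq0d, hq0N, rfl⟩
      rw [h, Submodule.mem_bot] at hm0
      have hc0 : ∀ j, (q0 j).coeff (d - 1) = 0 := by
        intro j
        have h' : (q0 j).coeff (d - 1)
            = b.repr (∑ i, (q0 i).coeff (d - 1) • b i) j :=
          (stmt11repr_sum b (fun i => (q0 i).coeff (d - 1)) j).symm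
        rw [hm0] at h'
        simpa using h'
      have : P (d - 1) := by
        refine ⟨q0, fun i => ?_, hq0N, hq0ne⟩
        refine (Polynomial.degree_lt_iff_coeff_zero _ _).mpr fun m hm => ?_
        rcases eq_or_lt_of_le (by exact_mod_cast hm : (d - 1 : ℕ) ≤ m) with h' | h'
        · rw [← h']; exact hc0 i
        · exact (Polynomial.degree_lt_iff_coeff_zero _ d).mp (hq0d i) m
            (by exact_mod_cast (by omega : (d : ℕ) ≤ m))
      exact Nat.find_min hPex (Nat.sub_lt hd0 one_pos) this
    · exact h
  -- choose, for each basis vector, a polynomial element of N with that top coefficient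
  have hbi : ∀ i : Fin (Module.finrank Q M), ∃ q : Fin (Module.finrank Q M) → Q[X],
      (∀ k, (q k).degree < (d : ℕ)) ∧ stmt11pelt b q ∈ N ∧
      (∑ k, (q k).coeff (d - 1) • b k) = b i := by
    intro i
    have : b i ∈ L := hLtop ▸ Submodule.mem_top
    exact this
  choose qs hdeg hmem htop using hbi
  set v : Fin (Module.finrank Q M) → RatFunc Q ⊗[Q] M := fun i => stmt11pelt b (qs i) with hv
  have hvN : ∀ i, v i ∈ N := fun i => hmem i
  -- the coefficients of qs at the top are Kronecker deltas
  have h7 : ∀ i j, (qs i j).coeff (d - 1) = b.repr (b i) j := by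
    intro i j
    rw [← htop i, stmt11repr_sum]
  -- linear independence over RatFunc Q
  have hli : LinearIndependent (RatFunc Q) v := by
    rw [Fintype.linearIndependent_iff]
    intro c hc
    obtain ⟨f, p, hf, hp⟩ := stmt11common c
    have h2 : ∑ i, algebraMap Q[X] (RatFunc Q) (p i) • v i = 0 := by
      have : ∀ i, algebraMap Q[X] (RatFunc Q) (p i) • v i
          = algebraMap Q[X] (RatFunc Q) f • (c i • v i) := by
        intro i
        rw [(hp i).1, mul_smul]
      rw [Finset.sum_congr rfl fun i _ => this i, ← Finset.smul_sum, hc, smul_zero]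
    have h3 : stmt11pelt b (fun j => ∑ i, p i * qs i j) = 0 := by
      rw [stmt11pelt_sum, Finset.sum_congr rfl fun i _ => stmt11pelt_smul b (p i) (qs i)]
      exact h2
    have h4 : ∀ j, ∑ i, p i * qs i j = 0 := fun j => stmt11pelt_eq_zero h3 j
    have h5 : ∀ i, p i = 0 := by
      by_contra hcon
      push_neg at hcon
      obtain ⟨i0, hi0⟩ := hcon
      set s : Finset (Fin (Module.finrank Q M)) := Finset.univ.filter (fun i => p i ≠ 0) with hs
      have hsne : s.Nonempty := ⟨i0, Finset.mem_filter.mpr ⟨Finset.mem_univ _, hi0⟩⟩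
      set D := s.sup fun i => (p i).natDegree with hD
      obtain ⟨i1, hi1s, hi1⟩ := Finset.exists_mem_eq_sup s hsne (fun i => (p i).natDegree)
      have hi1ne : p i1 ≠ 0 := by
        have := hi1s
        simp only [hs, Finset.mem_filter] at this
        exact this.2
      have key : ∀ j i, (p i * qs i j).coeff (D + (d - 1))
          = (p i).coeff D * (qs i j).coeff (d - 1) := by
        intro j i
        apply Polynomial.coeff_mul_add_eq_of_natDegree_le
        · by_cases h : p i = 0
          · simp [h]
          · exact Finset.le_sup (f := fun i => (p i).natDegree)
              (Finset.mem_filter.mpr ⟨Finset.mem_univ _, h⟩)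
        · refine Polynomial.natDegree_le_iff_coeff_eq_zero.mpr fun m hm => ?_
          exact (Polynomial.degree_lt_iff_coeff_zero _ d).mp (hdeg i j) m
            (by exact_mod_cast (by omega : (d : ℕ) ≤ m))
      have h6 : ∑ i, (p i).coeff D * (qs i i1).coeff (d - 1) = 0 := by
        have := congrArg (fun r : Q[X] => r.coeff (D + (d - 1))) (h4 i1)
        simpa [Polynomial.finset_sum_coeff, key i1] using this
      have h8 : (p i1).coeff D = 0 := by
        have heq : ∀ i, (p i).coeff D * (qs i i1).coeff (d - 1)
            = if i = i1 then (p i1).coeff D else 0 := by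
          intro i
          rw [h7 i i1, Module.Basis.repr_self, Finsupp.single_apply]
          split
          · rename_i hii; rw [hii, mul_one]
          · rw [mul_zero]
        rw [Finset.sum_congr rfl fun i _ => heq i, Finset.sum_ite_eq'] at h6
        simpa using h6
      have hi1D : D = (p i1).natDegree := hi1
      rw [hi1D] at h8
      exact hi1ne (Polynomial.leadingCoeff_eq_zero.mp h8)
    intro i
    exact (hp i).2.mp (h5 i)
  -- conclude by dimension count
  have hfd : FiniteDimensional (RatFunc Q) (RatFunc Q ⊗[Q] M) :=
    Module.Basis.finiteDimensional_of_finite (b.baseChange (RatFunc Q))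
  let vN : Fin (Module.finrank Q M) → N := fun i => ⟨v i, hvN i⟩
  have hliN : LinearIndependent (RatFunc Q) vN := by
    refine LinearIndependent.of_comp N.subtype ?_
    exact hli
  have h9 : Fintype.card (Fin (Module.finrank Q M)) ≤ Module.finrank (RatFunc Q) N :=
    hliN.fintype_card_le_finrank
  have h10 : Module.finrank (RatFunc Q) (RatFunc Q ⊗[Q] M)
      = Fintype.card (Fin (Module.finrank Q M)) :=
    Module.finrank_eq_card_basis (b.baseChange (RatFunc Q))
  have h11 := Submodule.finrank_le N
  exact Submodule.eq_top_of_finrank_eq (by omega)
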